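/- Reduction is compatible with paths: if there is a directed path in MG between two moves m, m' ∈ M_↓log, then there is a directed path between them in MG_↓log. -/

import Mathlib

/-- The reduction of a graph of moves `C` to the moves satisfying `P`:
there is an edge between two `P`-moves iff some `C`-path joins them all of whose
interior vertices fail `P`. -/
def red {M : Type*} (P : M → Prop) (C : M → M → Prop) (m₁ m₂ : M) : Prop :=
  P m₁ ∧ P m₂ ∧ ∃ l : List M, List.Chain' C (m₁ :: l ++ [m₂]) ∧ ∀ x ∈ l, ¬ P x

private lemma chain'_snoc {M : Type*} {C : M → M → Prop} {a b c : M} {l : List M}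
    (h : List.Chain' C (a :: l ++ [b])) (hbc : C b c) :
    List.Chain' C (a :: (l ++ [b]) ++ [c]) := by
  have : a :: (l ++ [b]) ++ [c] = (a :: l ++ [b]) ++ [c] := by simp
  rw [this]
  refine List.IsChain.append h (List.isChain_singleton c) ?_
  intro x hx y hy
  have h2 : (a :: l ++ [b]) = (a :: l) ++ [b] := by simp
  rw [h2, List.getLast?_concat] at hx
  simp at hx hy
  subst hx; subst hy; exact hbc

private lemma red_aux {M : Type*} (C : M → M → Prop) (P : M → Prop) {m' : M} (hm' : P m') :
    ∀ {mc : M}, Relation.TransGen C mc m' →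
      ∀ m₀ (l : List M), P m₀ → List.Chain' C (m₀ :: l ++ [mc]) → (∀ x ∈ l, ¬ P x) →
        Relation.TransGen (red P C) m₀ m' := by
  intro mc h
  induction h using Relation.TransGen.head_induction_on with
  | @single a hcm' =>
    intro m₀ l hm₀ hchain hl
    by_cases hPa : P a
    · exact Relation.TransGen.head ⟨hm₀, hPa, l, hchain, hl⟩
        (Relation.TransGen.single ⟨hPa, hm', [], List.isChain_pair.mpr hcm', by simp⟩)
    · refine Relation.TransGen.single ⟨hm₀, hm', l ++ [a], chain'_snoc hchain hcm', ?_⟩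
      intro x hx
      rcases List.mem_append.1 hx with h1 | h2
      · exact hl x h1
      · exact (by simpa using h2 : x = a) ▸ hPa
  | @head a b hab _ ih =>
    intro m₀ l hm₀ hchain hl
    by_cases hPa : P a
    · exact Relation.TransGen.head ⟨hm₀, hPa, l, hchain, hl⟩
        (ih a [] hPa (List.isChain_pair.mpr hab) (by simp))
    · refine ih m₀ (l ++ [a]) hm₀ (chain'_snoc hchain hab) ?_
      intro x hx
      rcases List.mem_append.1 hx with h1 | h2
      · exact hl x h1
      · exact (by simpa using h2 : x = a) ▸ hPa

/-- Reduction is compatible with paths: if `MG = (M, C)` is a DAG of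
moves and there is a directed path in `MG` between two moves in `M_↓log` (i.e.
satisfying `P`), then there is a directed path between them in the reduction. -/
theorem reduction_compatible_with_paths {M : Type*} (C : M → M → Prop) (P : M → Prop)
    (hdag : ∀ m : M, ¬ Relation.TransGen C m m)
    (m m' : M) (hm : P m) (hm' : P m')
    (hpath : Relation.TransGen C m m') :
    Relation.TransGen (red P C) m m' := by
  obtain ⟨b, hmb, hb⟩ := Relation.TransGen.head'_iff.mp hpath
  rcases Relation.reflTransGen_iff_eq_or_transGen.mp hb with rfl | hb'
  · exact Relation.TransGen.single ⟨hm, hm', [], List.isChain_pair.mpr hmb, by simp⟩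
  · exact red_aux C P hm' hb' m [] hm (List.isChain_pair.mpr hmb) (by simp)
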